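/- Let ε be a random vector in ℝ^d with i.i.d. standard Gaussian coordinates and let ξ be a standard Gaussian real random variable independent of ε. Fix v ∈ ℝ^d, σ > 0, σ_ξ ≥ 0, and set σ_R² := σ²‖v‖² + σ_ξ² with σ_R > 0. Define R̃ := −σ (v·ε) + σ_ξ ξ. Then the covariance matrix of the random vector R̃ ε equals σ_R² I_d + σ² v v^⊤. Consequently the single-step ES update Δθ := (α/(N σ_R)) Σ_{i=1}^N R̃_i ε_i built from N i.i.d. copies has covariance Cov[Δθ] = (α²/N) I_d + (α² σ² / (N σ_R²)) v v^⊤. -/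

import Mathlib

open MeasureTheory ProbabilityTheory Matrix Real
open scoped NNReal ENNReal

noncomputable section ESAux



lemma integrable_pow_mul_gauss (n : ℕ) :
    Integrable (fun x : ℝ => x ^ n * Real.exp (-(2⁻¹) * x ^ 2)) := by
  have key : ∀ x : ℝ, ‖x ^ n * Real.exp (-(2⁻¹) * x ^ 2)‖ ≤
      ((n.factorial : ℝ) * Real.exp 1) * Real.exp (-(4⁻¹) * x ^ 2) := by
    intro x
    rw [norm_mul, norm_pow, Real.norm_eq_abs, Real.norm_eq_abs, Real.abs_exp, ← abs_pow,
      abs_pow]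
    have h1 : |x| ^ n ≤ (n.factorial : ℝ) * Real.exp |x| := by
      have h2 := Real.sum_le_exp_of_nonneg (abs_nonneg x) (n + 1)
      have h3 : |x| ^ n / (n.factorial : ℝ) ≤ ∑ i ∈ Finset.range (n + 1), |x| ^ i / i.factorial :=
        Finset.single_le_sum (f := fun i => |x| ^ i / (i.factorial : ℝ))
          (fun i _ => by positivity) (Finset.self_mem_range_succ n)
      have h4 : |x| ^ n / (n.factorial : ℝ) ≤ Real.exp |x| := h3.trans h2
      have h5 : (0:ℝ) < n.factorial := by positivity
      calc |x| ^ n = (|x| ^ n / n.factorial) * n.factorial := by field_simp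
        _ ≤ Real.exp |x| * n.factorial := by
            exact mul_le_mul_of_nonneg_right h4 h5.le
        _ = (n.factorial : ℝ) * Real.exp |x| := by ring
    calc |x| ^ n * Real.exp (-(2⁻¹) * x ^ 2)
        ≤ ((n.factorial : ℝ) * Real.exp |x|) * Real.exp (-(2⁻¹) * x ^ 2) :=
          mul_le_mul_of_nonneg_right h1 (Real.exp_pos _).le
      _ = (n.factorial : ℝ) * Real.exp (|x| + -(2⁻¹) * x ^ 2) := by
          rw [Real.exp_add]; ring
      _ ≤ ((n.factorial : ℝ) * Real.exp 1) * Real.exp (-(4⁻¹) * x ^ 2) := by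
          rw [mul_assoc, ← Real.exp_add]
          refine mul_le_mul_of_nonneg_left (Real.exp_le_exp.2 ?_) (by positivity)
          nlinarith [sq_nonneg (|x| - 2), sq_abs x]
  exact ((integrable_exp_neg_mul_sq (by norm_num : (0:ℝ) < 4⁻¹)).const_mul
    ((n.factorial : ℝ) * Real.exp 1)).mono'
    (((continuous_pow n).mul (Real.continuous_exp.comp (by continuity))).aestronglyMeasurable)
    (ae_of_all _ key)

lemma gauss_m0 : ∫ x : ℝ, Real.exp (-(2⁻¹) * x ^ 2) = Real.sqrt (2 * π) := by
  rw [integral_gaussian]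
  rw [show (π / 2⁻¹ : ℝ) = 2 * π by ring]

lemma hasDerivAt_gaussfn (x : ℝ) :
    HasDerivAt (fun y : ℝ => Real.exp (-(2⁻¹) * y ^ 2)) (-x * Real.exp (-(2⁻¹) * x ^ 2)) x := by
  have h1 : HasDerivAt (fun y : ℝ => -(2⁻¹ : ℝ) * y ^ 2) (-x) x := by
    have := (hasDerivAt_pow 2 x).const_mul (-(2⁻¹ : ℝ))
    exact this.congr_deriv (by push_cast; ring)
  have := h1.exp
  convert this using 1
  ring

lemma gauss_m1 : ∫ x : ℝ, x * Real.exp (-(2⁻¹) * x ^ 2) = 0 := by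
  have hD : ∀ x : ℝ, HasDerivAt (fun y : ℝ => -Real.exp (-(2⁻¹) * y ^ 2))
      (x * Real.exp (-(2⁻¹) * x ^ 2)) x := by
    intro x
    have := (hasDerivAt_gaussfn x).neg
    exact this.congr_deriv (by ring)
  have hint : Integrable (fun x : ℝ => x * Real.exp (-(2⁻¹) * x ^ 2)) := by
    simpa using integrable_pow_mul_gauss 1
  have hint2 : Integrable (fun x : ℝ => -Real.exp (-(2⁻¹) * x ^ 2)) :=
    (by simpa using integrable_pow_mul_gauss 0 :
      Integrable (fun x : ℝ => Real.exp (-(2⁻¹) * x ^ 2))).neg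
  exact integral_eq_zero_of_hasDerivAt_of_integrable hD hint hint2

lemma gauss_rec (n : ℕ) : ∫ x : ℝ, x ^ (n + 2) * Real.exp (-(2⁻¹) * x ^ 2)
    = (n + 1 : ℝ) * ∫ x : ℝ, x ^ n * Real.exp (-(2⁻¹) * x ^ 2) := by
  have hu : ∀ x : ℝ, HasDerivAt (fun y : ℝ => y ^ (n + 1)) (((n:ℝ) + 1) * x ^ n) x := by
    intro x
    have := hasDerivAt_pow (n + 1) x
    exact this.congr_deriv (by rw [Nat.add_sub_cancel]; push_cast; ring)
  have h1 : Integrable ((fun y : ℝ => y ^ (n+1)) * (fun x : ℝ => -x * Real.exp (-(2⁻¹) * x ^ 2))) := by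
    have heq : ((fun y : ℝ => y ^ (n+1)) * (fun x : ℝ => -x * Real.exp (-(2⁻¹) * x ^ 2)))
        = fun x : ℝ => -(x ^ (n + 2) * Real.exp (-(2⁻¹) * x ^ 2)) := by
      funext x
      simp only [Pi.mul_apply]
      ring
    rw [heq]
    exact (integrable_pow_mul_gauss (n + 2)).neg
  have h2 : Integrable ((fun x : ℝ => ((n:ℝ) + 1) * x ^ n) * (fun y : ℝ => Real.exp (-(2⁻¹) * y ^ 2))) := by
    have heq : ((fun x : ℝ => ((n:ℝ) + 1) * x ^ n) * (fun y : ℝ => Real.exp (-(2⁻¹) * y ^ 2)))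
        = fun x : ℝ => ((n:ℝ) + 1) * (x ^ n * Real.exp (-(2⁻¹) * x ^ 2)) := by
      funext x
      simp only [Pi.mul_apply]
      ring
    rw [heq]
    exact (integrable_pow_mul_gauss n).const_mul _
  have h3 : Integrable ((fun y : ℝ => y ^ (n+1)) * (fun x : ℝ => Real.exp (-(2⁻¹) * x ^ 2))) := by
    have heq : ((fun y : ℝ => y ^ (n+1)) * (fun x : ℝ => Real.exp (-(2⁻¹) * x ^ 2)))
        = fun x : ℝ => x ^ (n + 1) * Real.exp (-(2⁻¹) * x ^ 2) := by
      funext x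
      simp only [Pi.mul_apply]
    rw [heq]
    exact integrable_pow_mul_gauss (n + 1)
  have h := integral_mul_deriv_eq_deriv_mul_of_integrable (fun x _ => hu x) (fun x _ => hasDerivAt_gaussfn x) h1 h2 h3
  have e1 : ∫ x : ℝ, x ^ (n+1) * (-x * Real.exp (-(2⁻¹) * x ^ 2))
      = -∫ x : ℝ, x ^ (n + 2) * Real.exp (-(2⁻¹) * x ^ 2) := by
    rw [← integral_neg]
    congr 1
    funext x
    ring
  have e2 : ∫ x : ℝ, ((n:ℝ) + 1) * x ^ n * Real.exp (-(2⁻¹) * x ^ 2)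
      = ((n:ℝ) + 1) * ∫ x : ℝ, x ^ n * Real.exp (-(2⁻¹) * x ^ 2) := by
    rw [← integral_const_mul]
    congr 1
    funext x
    ring
  rw [e1, e2] at h
  push_cast
  linarith



lemma gaussPDF_eq (x : ℝ) : gaussianPDFReal 0 1 x
    = (Real.sqrt (2 * π))⁻¹ * Real.exp (-(2⁻¹) * x ^ 2) := by
  simp only [gaussianPDFReal, NNReal.coe_one, mul_one, sub_zero]
  congr 1
  ring_nf

lemma gaussianReal_eq_withDensity : gaussianReal 0 1
    = volume.withDensity (fun x => ((Real.toNNReal (gaussianPDFReal 0 1 x) : ℝ≥0) : ℝ≥0∞)) := by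
  rw [gaussianReal_of_var_ne_zero 0 one_ne_zero]
  rfl

lemma sqrt_two_pi_pos : (0:ℝ) < Real.sqrt (2 * π) :=
  Real.sqrt_pos.mpr (by positivity)

lemma integral_gauss_eq (f : ℝ → ℝ) :
    ∫ x, f x ∂(gaussianReal 0 1)
      = (Real.sqrt (2 * π))⁻¹ * ∫ x, f x * Real.exp (-(2⁻¹) * x ^ 2) := by
  rw [gaussianReal_eq_withDensity,
    integral_withDensity_eq_integral_smul ((measurable_gaussianPDFReal 0 1).real_toNNReal) f]
  have : (fun x => Real.toNNReal (gaussianPDFReal 0 1 x) • f x)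
      = fun x => (Real.sqrt (2 * π))⁻¹ * (f x * Real.exp (-(2⁻¹) * x ^ 2)) := by
    funext x
    rw [NNReal.smul_def, Real.coe_toNNReal _ (gaussianPDFReal_nonneg 0 1 x), smul_eq_mul,
      gaussPDF_eq]
    ring
  rw [this, integral_const_mul]

lemma integrable_gauss_iff (f : ℝ → ℝ) :
    Integrable f (gaussianReal 0 1)
      ↔ Integrable (fun x => f x * Real.exp (-(2⁻¹) * x ^ 2)) volume := by
  rw [gaussianReal_eq_withDensity,
    integrable_withDensity_iff_integrable_smul ((measurable_gaussianPDFReal 0 1).real_toNNReal)]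
  have : (fun x => Real.toNNReal (gaussianPDFReal 0 1 x) • f x)
      = fun x => (Real.sqrt (2 * π))⁻¹ * (f x * Real.exp (-(2⁻¹) * x ^ 2)) := by
    funext x
    rw [NNReal.smul_def, Real.coe_toNNReal _ (gaussianPDFReal_nonneg 0 1 x), smul_eq_mul,
      gaussPDF_eq]
    ring
  rw [this, integrable_const_mul_iff (isUnit_iff_ne_zero.2 (by positivity : ((Real.sqrt (2*π))⁻¹ : ℝ) ≠ 0))]

lemma integrable_pow_gauss (n : ℕ) : Integrable (fun x : ℝ => x ^ n) (gaussianReal 0 1) :=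
  (integrable_gauss_iff _).2 (integrable_pow_mul_gauss n)

def gm (n : ℕ) : ℝ := ∫ x, x ^ n ∂(gaussianReal 0 1)

lemma gm_zero : gm 0 = 1 := by
  simp [gm]

lemma gm_one : gm 1 = 0 := by
  rw [gm, integral_gauss_eq]
  simp only [pow_one, gauss_m1, mul_zero]

lemma gm_two : gm 2 = 1 := by
  rw [gm, integral_gauss_eq]
  rw [show (2:ℕ) = 0 + 2 by norm_num, gauss_rec 0]
  simp only [pow_zero, one_mul, Nat.cast_zero, zero_add]
  rw [gauss_m0, inv_mul_cancel₀ sqrt_two_pi_pos.ne']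

lemma gm_three : gm 3 = 0 := by
  rw [gm, integral_gauss_eq]
  rw [show (3:ℕ) = 1 + 2 by norm_num, gauss_rec 1]
  simp only [pow_one, gauss_m1, mul_zero]

lemma gm_four : gm 4 = 3 := by
  rw [gm, integral_gauss_eq]
  have h0 := gauss_rec 0
  simp only [zero_add] at h0
  rw [show (4:ℕ) = 2 + 2 by norm_num, gauss_rec 2, h0]
  simp only [pow_zero, one_mul, Nat.cast_zero, zero_add, Nat.cast_ofNat]
  rw [gauss_m0]
  field_simp
  norm_num



variable {μ : Measure ℝ} [IsProbabilityMeasure μ]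

lemma integrable_pi_prod : ∀ (n : ℕ) (f : Fin n → ℝ → ℝ), (∀ i, Integrable (f i) μ) →
    Integrable (fun x : Fin n → ℝ => ∏ i, f i (x i)) (Measure.pi fun _ => μ) := by
  intro n
  induction n with
  | zero =>
    intro f _
    simpa using (integrable_const (1:ℝ) (μ := Measure.pi fun _ : Fin 0 => μ))
  | succ n n_ih =>
    intro f hf
    have h := ((measurePreserving_piFinSuccAbove (fun _ : Fin (n+1) => μ) 0).symm)
    rw [← h.integrable_comp_emb (MeasurableEquiv.measurableEmbedding _)]
    simp only [MeasurableEquiv.piFinSuccAbove_symm_apply, Fin.insertNthEquiv,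
      Fin.prod_univ_succ, Fin.insertNth_zero, Fin.zero_succAbove, cast_eq,
      Function.comp_def, Fin.cons_zero, Fin.cons_succ, Equiv.coe_fn_mk]
    have : Integrable (fun x : Fin n → ℝ => ∏ j, f (Fin.succ j) (x j)) (Measure.pi fun _ => μ) :=
      n_ih _ (fun i => hf _)
    exact Integrable.mul_prod (hf 0) this

lemma integral_pi_prod : ∀ (n : ℕ) (f : Fin n → ℝ → ℝ),
    ∫ x : Fin n → ℝ, ∏ i, f i (x i) ∂(Measure.pi fun _ => μ) = ∏ i, ∫ x, f i x ∂μ := by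
  intro n
  induction n with
  | zero =>
    intro f
    simp
  | succ n n_ih =>
    intro f
    calc
      _ = ∫ x : ℝ × (Fin n → ℝ), f 0 x.1 * ∏ i : Fin n, f (Fin.succ i) (x.2 i)
          ∂(μ.prod (Measure.pi fun _ => μ)) := by
        rw [← ((measurePreserving_piFinSuccAbove (fun _ : Fin (n+1) => μ) 0).symm).integral_comp']
        simp only [MeasurableEquiv.piFinSuccAbove_symm_apply, Fin.insertNthEquiv,
          Fin.prod_univ_succ, Fin.insertNth_zero, Equiv.coe_fn_mk, Fin.cons_succ,
          Fin.zero_succAbove, cast_eq, Fin.cons_zero]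
      _ = (∫ x, f 0 x ∂μ) * ∏ i : Fin n, ∫ x, f (Fin.succ i) x ∂μ := by
        rw [← n_ih, ← integral_prod_mul]
      _ = ∏ i, ∫ x, f i x ∂μ := by rw [Fin.prod_univ_succ]



lemma gm_def (n : ℕ) : gm n = ∫ x, x ^ n ∂(gaussianReal 0 1) := rfl












variable {d : ℕ}

/-- The standard Gaussian product measure on `Fin d → ℝ`. -/
def gpi (d : ℕ) : Measure (Fin d → ℝ) := Measure.pi fun _ => gaussianReal 0 1

instance : IsProbabilityMeasure (gpi d) := by unfold gpi; infer_instance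

lemma int_monomial (m : Fin d → ℕ) :
    ∫ x : Fin d → ℝ, ∏ i, x i ^ m i ∂(gpi d) = ∏ i, gm (m i) := by
  rw [gpi, integral_pi_prod d (fun i t => t ^ m i)]
  exact Finset.prod_congr rfl fun i _ => (gm_def (m i)).symm

lemma integrable_monomial (m : Fin d → ℕ) :
    Integrable (fun x : Fin d → ℝ => ∏ i, x i ^ m i) (gpi d) :=
  integrable_pi_prod d (fun i t => t ^ m i) (fun i => integrable_pow_gauss (m i))

/-- exponent of the coordinate monomial `x a`. -/
def eIdx (a : Fin d) : Fin d → ℕ := fun i => if i = a then 1 else 0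

lemma prod_pow_e (x : Fin d → ℝ) (a : Fin d) : ∏ i, x i ^ eIdx a i = x a := by
  simp [eIdx, pow_ite, Finset.prod_ite_eq']

lemma mono1 (x : Fin d → ℝ) (a : Fin d) : x a = ∏ i, x i ^ eIdx a i := (prod_pow_e x a).symm

lemma mono2 (x : Fin d → ℝ) (a b : Fin d) :
    x a * x b = ∏ i, x i ^ (eIdx a i + eIdx b i) := by
  simp only [pow_add, Finset.prod_mul_distrib, prod_pow_e]

lemma mono3 (x : Fin d → ℝ) (a b c : Fin d) :
    x a * x b * x c = ∏ i, x i ^ (eIdx a i + eIdx b i + eIdx c i) := by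
  simp only [pow_add, Finset.prod_mul_distrib, prod_pow_e]

lemma mono4 (x : Fin d → ℝ) (j k a b : Fin d) :
    x j * x k * x a * x b = ∏ i, x i ^ (eIdx j i + eIdx k i + eIdx a i + eIdx b i) := by
  simp only [pow_add, Finset.prod_mul_distrib, prod_pow_e]

lemma integrable_mono1 (a : Fin d) : Integrable (fun x : Fin d → ℝ => x a) (gpi d) := by
  simp_rw [mono1 _ a]; exact integrable_monomial _

lemma integrable_mono2 (a b : Fin d) :
    Integrable (fun x : Fin d → ℝ => x a * x b) (gpi d) := by
  simp_rw [mono2 _ a b]; exact integrable_monomial _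

lemma integrable_mono3 (a b c : Fin d) :
    Integrable (fun x : Fin d → ℝ => x a * x b * x c) (gpi d) := by
  simp_rw [mono3 _ a b c]; exact integrable_monomial _

lemma integrable_mono4 (j k a b : Fin d) :
    Integrable (fun x : Fin d → ℝ => x j * x k * x a * x b) (gpi d) := by
  simp_rw [mono4 _ j k a b]; exact integrable_monomial _

lemma int_mono1 (a : Fin d) : ∫ x : Fin d → ℝ, x a ∂(gpi d) = 0 := by
  simp_rw [mono1 _ a, int_monomial]
  exact Finset.prod_eq_zero (Finset.mem_univ a) (by simp [eIdx, gm_one])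

lemma int_mono2 (a b : Fin d) :
    ∫ x : Fin d → ℝ, x a * x b ∂(gpi d) = if a = b then (1:ℝ) else 0 := by
  simp_rw [mono2 _ a b, int_monomial]
  by_cases hab : a = b
  · subst hab
    rw [if_pos rfl]
    refine Finset.prod_eq_one fun i _ => ?_
    by_cases h : i = a <;> simp [eIdx, h, gm_two, gm_zero]
  · rw [if_neg hab]
    exact Finset.prod_eq_zero (Finset.mem_univ a) (by simp [eIdx, hab, gm_one])

lemma isserlis (j k a b : Fin d) :
    ∫ x : Fin d → ℝ, x j * x k * x a * x b ∂(gpi d)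
      = (if j = k then (1:ℝ) else 0) * (if a = b then (1:ℝ) else 0)
        + (if j = a then (1:ℝ) else 0) * (if k = b then (1:ℝ) else 0)
        + (if j = b then (1:ℝ) else 0) * (if k = a then (1:ℝ) else 0) := by
  simp_rw [mono4 _ j k a b, int_monomial]
  by_cases hjk : j = k
  · subst hjk
    by_cases hab : a = b
    · subst hab
      by_cases hja : j = a
      · subst hja
        have h1 : ∀ i, gm (eIdx j i + eIdx j i + eIdx j i + eIdx j i)
            = if i = j then 3 else 1 := by
          intro i; by_cases h : i = j <;> simp [eIdx, h, gm_four, gm_zero]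
        rw [Finset.prod_congr rfl (fun i _ => h1 i),
          Finset.prod_ite_eq' Finset.univ j (fun _ => (3:ℝ))]
        simp only [Finset.mem_univ, if_true, if_pos rfl]
        norm_num
      · have haj : ¬ a = j := fun h => hja h.symm
        have h1 : ∀ i, gm (eIdx j i + eIdx j i + eIdx a i + eIdx a i) = 1 := by
          intro i
          by_cases h : i = j
          · simp [eIdx, h, hja, gm_two]
          · by_cases h' : i = a <;> simp [eIdx, h, h', haj, gm_two, gm_zero]
        rw [Finset.prod_eq_one (fun i _ => h1 i)]
        simp [hja]
    · refine Eq.trans (Finset.prod_eq_zero (Finset.mem_univ a) ?_) ?_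
      · by_cases h : a = j
        · have hjb2 : ¬ j = b := fun hh => hab (h.trans hh)
          simp [eIdx, h, hjb2, gm_three]
        · simp [eIdx, h, hab, gm_one]
      · by_cases h1 : j = a <;> by_cases h2 : j = b <;> simp_all
  · by_cases hab : a = b
    · subst hab
      refine Eq.trans (Finset.prod_eq_zero (Finset.mem_univ j) ?_) ?_
      · by_cases h : j = a
        · have hak : ¬ a = k := fun hh => hjk (h.trans hh)
          simp [eIdx, h, hak, gm_three]
        · simp [eIdx, h, hjk, gm_one]
      · by_cases h1 : j = a <;> by_cases h2 : k = a <;> simp_all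
    · by_cases hja : j = a
      · subst hja
        by_cases hkb : k = b
        · subst hkb
          have hkj : ¬ k = j := fun h => hjk h.symm
          have h1 : ∀ i, gm (eIdx j i + eIdx k i + eIdx j i + eIdx k i) = 1 := by
            intro i
            by_cases h : i = j
            · simp [eIdx, h, hjk, gm_two]
            · by_cases h' : i = k <;> simp [eIdx, h, h', hkj, gm_two, gm_zero]
          rw [Finset.prod_eq_one (fun i _ => h1 i)]
          simp [hjk, hab]
        · refine Eq.trans (Finset.prod_eq_zero (Finset.mem_univ k) ?_) ?_
          · have hkj : ¬ k = j := fun h => hjk h.symm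
            simp [eIdx, hkj, hkb, gm_one]
          · simp_all
      · by_cases hjb : j = b
        · subst hjb
          by_cases hka : k = a
          · subst hka
            have hkj : ¬ k = j := fun h => hjk h.symm
            have h1 : ∀ i, gm (eIdx j i + eIdx k i + eIdx k i + eIdx j i) = 1 := by
              intro i
              by_cases h : i = j
              · simp [eIdx, h, hjk, gm_two]
              · by_cases h' : i = k <;> simp [eIdx, h, h', hkj, gm_two, gm_zero]
            rw [Finset.prod_eq_one (fun i _ => h1 i)]
            simp [hjk, hab, hkj]
          · refine Eq.trans (Finset.prod_eq_zero (Finset.mem_univ a) ?_) ?_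
            · have h1 : ¬ a = j := fun h => hja h.symm
              have h2 : ¬ a = k := fun h => hka h.symm
              simp [eIdx, h1, h2, hab, gm_one]
            · simp_all
        · refine Eq.trans (Finset.prod_eq_zero (Finset.mem_univ j) ?_) ?_
          · simp [eIdx, hjk, hja, hjb, gm_one]
          · simp_all

















variable {d : ℕ} (v : Fin d → ℝ)

lemma sum_isserlis (a b : Fin d) :
    ∑ j, ∑ k, v j * v k * (∫ x : Fin d → ℝ, x j * x k * x a * x b ∂(gpi d))
      = (∑ j, v j ^ 2) * (if a = b then (1:ℝ) else 0) + 2 * (v a * v b) := by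
  simp_rw [isserlis]
  by_cases hab : a = b
  · subst hab
    simp only [if_pos rfl, mul_one]
    simp [mul_add, Finset.sum_add_distrib, mul_ite, ite_mul, mul_zero, zero_mul, mul_one,
      Finset.sum_ite_eq, Finset.sum_ite_eq', Finset.mem_univ]
    ring_nf
  · simp only [if_neg hab, mul_zero, zero_mul, zero_add, mul_one]
    simp [mul_add, Finset.sum_add_distrib, mul_ite, ite_mul, mul_zero, zero_mul, mul_one,
      Finset.sum_ite_eq, Finset.sum_ite_eq', Finset.mem_univ]
    ring

lemma intA (a : Fin d) :
    ∫ x : Fin d → ℝ, (∑ j, v j * x j) * x a ∂(gpi d) = v a := by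
  have hfun : (fun x : Fin d → ℝ => (∑ j, v j * x j) * x a)
      = fun x => ∑ j, v j * (x j * x a) := by
    funext x
    rw [Finset.sum_mul]
    exact Finset.sum_congr rfl fun j _ => by ring
  rw [hfun, integral_finset_sum _
    (fun j _ => (integrable_mono2 j a).const_mul (v j))]
  simp_rw [integral_const_mul, int_mono2]
  simp [Finset.sum_ite_eq', Finset.mem_univ]

lemma intgA (a : Fin d) :
    Integrable (fun x : Fin d → ℝ => (∑ j, v j * x j) * x a) (gpi d) := by
  have hfun : (fun x : Fin d → ℝ => (∑ j, v j * x j) * x a)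
      = fun x => ∑ j, v j * (x j * x a) := by
    funext x
    rw [Finset.sum_mul]
    exact Finset.sum_congr rfl fun j _ => by ring
  rw [hfun]
  exact integrable_finset_sum _ (fun j _ => (integrable_mono2 j a).const_mul (v j))

lemma hfunAA (a b : Fin d) : (fun x : Fin d → ℝ =>
      ((∑ j, v j * x j) * x a) * ((∑ k, v k * x k) * x b))
    = fun x => ∑ j, ∑ k, v j * v k * (x j * x k * x a * x b) := by
  funext x
  rw [show ((∑ j, v j * x j) * x a) * ((∑ k, v k * x k) * x b)
      = ((∑ j, v j * x j) * (∑ k, v k * x k)) * (x a * x b) by ring,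
    Finset.sum_mul_sum, Finset.sum_mul]
  refine Finset.sum_congr rfl fun j _ => ?_
  rw [Finset.sum_mul]
  exact Finset.sum_congr rfl fun k _ => by ring

lemma intAA (a b : Fin d) :
    ∫ x : Fin d → ℝ, ((∑ j, v j * x j) * x a) * ((∑ k, v k * x k) * x b) ∂(gpi d)
      = (∑ j, v j ^ 2) * (if a = b then (1:ℝ) else 0) + 2 * (v a * v b) := by
  rw [hfunAA, integral_finset_sum _ (fun j _ => integrable_finset_sum _
    (fun k _ => (integrable_mono4 j k a b).const_mul (v j * v k)))]
  simp_rw [integral_finset_sum _ (fun k _ => (integrable_mono4 _ k a b).const_mul (v _ * v k)),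
    integral_const_mul]
  exact sum_isserlis v a b

lemma intgAA (a b : Fin d) :
    Integrable (fun x : Fin d → ℝ =>
      ((∑ j, v j * x j) * x a) * ((∑ k, v k * x k) * x b)) (gpi d) := by
  rw [hfunAA]
  exact integrable_finset_sum _ (fun j _ => integrable_finset_sum _
    (fun k _ => (integrable_mono4 j k a b).const_mul (v j * v k)))

lemma intg3 (a b : Fin d) :
    Integrable (fun x : Fin d → ℝ => x a * ((∑ k, v k * x k) * x b)) (gpi d) := by
  have hfun : (fun x : Fin d → ℝ => x a * ((∑ k, v k * x k) * x b))
      = fun x => ∑ k, v k * (x a * x k * x b) := by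
    funext x
    rw [Finset.sum_mul, Finset.mul_sum]
    exact Finset.sum_congr rfl fun k _ => by ring
  rw [hfun]
  exact integrable_finset_sum _ (fun k _ => (integrable_mono3 a k b).const_mul (v k))

/-- product measure : gaussian vector ⊗ gaussian scalar -/
def gp2 (d : ℕ) : Measure ((Fin d → ℝ) × ℝ) := (gpi d).prod (gaussianReal 0 1)

instance : IsProbabilityMeasure (gp2 d) := by
  unfold gp2; infer_instance

lemma int_fst (f : (Fin d → ℝ) → ℝ) : ∫ p, f p.1 ∂(gp2 d) = ∫ x, f x ∂(gpi d) := by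
  rw [gp2, integral_fun_fst]
  simp

lemma integrable_fst {f : (Fin d → ℝ) → ℝ} (hf : Integrable f (gpi d)) :
    Integrable (fun p : (Fin d → ℝ) × ℝ => f p.1) (gp2 d) := by
  have := hf.mul_prod (integrable_const (1:ℝ) (μ := gaussianReal 0 1))
  simpa [gp2] using this

lemma integrable_id_gauss : Integrable (fun t : ℝ => t) (gaussianReal 0 1) := by
  simpa using integrable_pow_gauss 1

lemma int_id_gauss : ∫ t : ℝ, t ∂(gaussianReal 0 1) = 0 := by
  have := gm_def 1
  simp only [pow_one] at this
  rw [← this, gm_one]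

lemma integrable_sq_gauss : Integrable (fun t : ℝ => t * t) (gaussianReal 0 1) := by
  have := integrable_pow_gauss 2
  apply this.congr
  filter_upwards with t
  ring

lemma int_sq_gauss : ∫ t : ℝ, t * t ∂(gaussianReal 0 1) = 1 := by
  have h : (fun t : ℝ => t * t) = fun t : ℝ => t ^ 2 := by funext t; ring
  rw [h, ← gm_def 2, gm_two]

variable (σ σξ : ℝ)

/-- The function whose covariance we compute: `(R̃, ε) ↦ R̃ · ε a` on the product space. -/
def F1 (a : Fin d) : ((Fin d → ℝ) × ℝ) → ℝ :=
  fun p => (-σ * ∑ j, v j * p.1 j + σξ * p.2) * p.1 a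

lemma measurable_F1 (a : Fin d) : Measurable (F1 v σ σξ a) := by
  unfold F1
  fun_prop

lemma F1_decomp (a : Fin d) : F1 v σ σξ a
    = fun p : (Fin d → ℝ) × ℝ => -σ * ((∑ j, v j * p.1 j) * p.1 a) + σξ * (p.1 a * p.2) := by
  funext p
  unfold F1
  ring

lemma integrable_F1 (a : Fin d) : Integrable (F1 v σ σξ a) (gp2 d) := by
  rw [F1_decomp]
  refine Integrable.add ?_ ?_
  · exact (integrable_fst (intgA v a)).const_mul _
  · have h := (integrable_mono1 a).mul_prod integrable_id_gauss
    exact h.const_mul σξ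

lemma specA (a : Fin d) :
    ∫ p : (Fin d → ℝ) × ℝ, (∑ j, v j * p.1 j) * p.1 a ∂(gp2 d) = v a := by
  have h := (int_fst (d := d) (fun x => (∑ j, v j * x j) * x a)).trans (intA v a)
  simpa using h

lemma specT (a : Fin d) :
    ∫ p : (Fin d → ℝ) × ℝ, p.1 a * p.2 ∂(gp2 d) = 0 := by
  have h := integral_prod_mul (μ := gpi d) (ν := gaussianReal 0 1)
    (fun x : Fin d → ℝ => x a) (fun t : ℝ => t)
  rw [gp2]
  simpa [int_id_gauss] using h

lemma specAA (a b : Fin d) :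
    ∫ p : (Fin d → ℝ) × ℝ,
        (∑ j, v j * p.1 j) * p.1 a * ((∑ k, v k * p.1 k) * p.1 b) ∂(gp2 d)
      = (∑ j, v j ^ 2) * (if a = b then (1:ℝ) else 0) + 2 * (v a * v b) := by
  have h := (int_fst (d := d)
    (fun x => (∑ j, v j * x j) * x a * ((∑ k, v k * x k) * x b))).trans (intAA v a b)
  simpa using h

lemma specTA (a b : Fin d) :
    ∫ p : (Fin d → ℝ) × ℝ, p.1 a * ((∑ k, v k * p.1 k) * p.1 b) * p.2 ∂(gp2 d) = 0 := by
  have h := integral_prod_mul (μ := gpi d) (ν := gaussianReal 0 1)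
    (fun x : Fin d → ℝ => x a * ((∑ k, v k * x k) * x b)) (fun t : ℝ => t)
  rw [gp2]
  simpa [int_id_gauss] using h

lemma specTT (a b : Fin d) :
    ∫ p : (Fin d → ℝ) × ℝ, p.1 a * p.1 b * (p.2 * p.2) ∂(gp2 d)
      = if a = b then (1:ℝ) else 0 := by
  have h := integral_prod_mul (μ := gpi d) (ν := gaussianReal 0 1)
    (fun x : Fin d → ℝ => x a * x b) (fun t : ℝ => t * t)
  rw [gp2]
  rw [int_sq_gauss, int_mono2] at h
  simpa using h

lemma int_F1 (a : Fin d) : ∫ p, F1 v σ σξ a p ∂(gp2 d) = -σ * v a := by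
  rw [F1_decomp]
  have h1 : Integrable (fun p : (Fin d → ℝ) × ℝ =>
      -σ * ((∑ j, v j * p.1 j) * p.1 a)) (gp2 d) := by
    exact (integrable_fst (intgA v a)).const_mul _
  have h2 : Integrable (fun p : (Fin d → ℝ) × ℝ => σξ * (p.1 a * p.2)) (gp2 d) := by
    exact ((integrable_mono1 a).mul_prod integrable_id_gauss).const_mul σξ
  rw [integral_add h1 h2, integral_const_mul, integral_const_mul, specA, specT]
  ring

lemma F1_mul_decomp (a b : Fin d) :
    (fun p : (Fin d → ℝ) × ℝ => F1 v σ σξ a p * F1 v σ σξ b p)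
    = fun p : (Fin d → ℝ) × ℝ =>
      σ ^ 2 * ((∑ j, v j * p.1 j) * p.1 a * ((∑ k, v k * p.1 k) * p.1 b))
      + -(σ * σξ) * (p.1 a * ((∑ k, v k * p.1 k) * p.1 b) * p.2)
      + -(σ * σξ) * (p.1 b * ((∑ k, v k * p.1 k) * p.1 a) * p.2)
      + σξ ^ 2 * (p.1 a * p.1 b * (p.2 * p.2)) := by
  funext p
  unfold F1
  ring

lemma integrable_F1_mul (a b : Fin d) :
    Integrable (fun p : (Fin d → ℝ) × ℝ => F1 v σ σξ a p * F1 v σ σξ b p) (gp2 d) := by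
  rw [F1_mul_decomp]
  refine Integrable.add (Integrable.add (Integrable.add ?_ ?_) ?_) ?_
  · exact (integrable_fst (intgAA v a b)).const_mul _
  · exact ((intg3 v a b).mul_prod integrable_id_gauss).const_mul _
  · exact ((intg3 v b a).mul_prod integrable_id_gauss).const_mul _
  · exact ((integrable_mono2 a b).mul_prod integrable_sq_gauss).const_mul _

lemma int_F1_mul (a b : Fin d) :
    ∫ p, F1 v σ σξ a p * F1 v σ σξ b p ∂(gp2 d)
      = σ ^ 2 * ((∑ j, v j ^ 2) * (if a = b then (1:ℝ) else 0) + 2 * (v a * v b))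
        + σξ ^ 2 * (if a = b then (1:ℝ) else 0) := by
  rw [F1_mul_decomp]
  have h1 : Integrable (fun p : (Fin d → ℝ) × ℝ =>
      σ ^ 2 * ((∑ j, v j * p.1 j) * p.1 a * ((∑ k, v k * p.1 k) * p.1 b))) (gp2 d) := by
    exact (integrable_fst (intgAA v a b)).const_mul _
  have h2 : Integrable (fun p : (Fin d → ℝ) × ℝ =>
      -(σ * σξ) * (p.1 a * ((∑ k, v k * p.1 k) * p.1 b) * p.2)) (gp2 d) := by
    exact ((intg3 v a b).mul_prod integrable_id_gauss).const_mul _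
  have h3 : Integrable (fun p : (Fin d → ℝ) × ℝ =>
      -(σ * σξ) * (p.1 b * ((∑ k, v k * p.1 k) * p.1 a) * p.2)) (gp2 d) := by
    exact ((intg3 v b a).mul_prod integrable_id_gauss).const_mul _
  have h4 : Integrable (fun p : (Fin d → ℝ) × ℝ =>
      σξ ^ 2 * (p.1 a * p.1 b * (p.2 * p.2))) (gp2 d) := by
    exact ((integrable_mono2 a b).mul_prod integrable_sq_gauss).const_mul _
  have h12 : Integrable (fun p : (Fin d → ℝ) × ℝ =>
      σ ^ 2 * ((∑ j, v j * p.1 j) * p.1 a * ((∑ k, v k * p.1 k) * p.1 b))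
      + -(σ * σξ) * (p.1 a * ((∑ k, v k * p.1 k) * p.1 b) * p.2)) (gp2 d) := by
    exact h1.add h2
  have h123 : Integrable (fun p : (Fin d → ℝ) × ℝ =>
      σ ^ 2 * ((∑ j, v j * p.1 j) * p.1 a * ((∑ k, v k * p.1 k) * p.1 b))
      + -(σ * σξ) * (p.1 a * ((∑ k, v k * p.1 k) * p.1 b) * p.2)
      + -(σ * σξ) * (p.1 b * ((∑ k, v k * p.1 k) * p.1 a) * p.2)) (gp2 d) := by
    exact h12.add h3
  rw [integral_add h123 h4, integral_add h12 h3, integral_add h1 h2,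
    integral_const_mul, integral_const_mul, integral_const_mul, integral_const_mul,
    specAA, specTA, specTA, specTT]
  ring

end ESAux

section Main

open MeasureTheory ProbabilityTheory Matrix

/-- **Covariance of the ES update on a linear landscape.**
With `ε i` i.i.d. standard Gaussian vectors in `ℝ^d`, `ξ i` i.i.d. standard Gaussian
scalars independent of the corresponding `ε i` (the pairs `(ε i, ξ i)` being jointly
i.i.d.), centered rewards `R̃ i = −σ (v·ε i) + σ_ξ ξ i`, and `σ_R² = σ²‖v‖² + σ_ξ²`,
the covariance of each `R̃ i • ε i` equals `σ_R² I_d + σ² v v^⊤`, and the ES update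
`Δθ = (α/(N σ_R)) ∑ i, R̃ i • ε i` has covariance
`(α²/N) I_d + (α² σ²/(N σ_R²)) v v^⊤`. -/
theorem es_linear_landscape_update_covariance
    {Ω : Type*} [MeasurableSpace Ω] (μ : Measure Ω) [IsProbabilityMeasure μ]
    (d N : ℕ) (hN : 0 < N) (v : Fin d → ℝ) (α σ σξ σR : ℝ)
    (hα : 0 < α) (hσ : 0 < σ) (hσξ : 0 ≤ σξ)
    (hσR2 : σR ^ 2 = σ ^ 2 * (∑ j, v j ^ 2) + σξ ^ 2) (hσRpos : 0 < σR)
    (ε : Fin N → Ω → (Fin d → ℝ)) (ξ : Fin N → Ω → ℝ)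
    (hεmeas : ∀ i, Measurable (ε i)) (hξmeas : ∀ i, Measurable (ξ i))
    (hεdist : ∀ i, Measure.map (ε i) μ = Measure.pi (fun _ : Fin d => gaussianReal 0 1))
    (hξdist : ∀ i, Measure.map (ξ i) μ = gaussianReal 0 1)
    (hpairindep : ∀ i, IndepFun (ε i) (ξ i) μ)
    (hiid : iIndepFun (fun i ω => (ε i ω, ξ i ω)) μ)
    (Rtilde : Fin N → Ω → ℝ)
    (hRtilde : ∀ i ω, Rtilde i ω = -σ * (∑ j, v j * ε i ω j) + σξ * ξ i ω)
    (Δθ : Ω → (Fin d → ℝ))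
    (hΔθ : ∀ ω j, Δθ ω j = (α / (N * σR)) * ∑ i, Rtilde i ω * ε i ω j) :
    (∀ i, (Matrix.of fun a b : Fin d =>
        (∫ ω, (Rtilde i ω * ε i ω a) * (Rtilde i ω * ε i ω b) ∂μ)
          - (∫ ω, Rtilde i ω * ε i ω a ∂μ) * (∫ ω, Rtilde i ω * ε i ω b ∂μ))
      = σR ^ 2 • (1 : Matrix (Fin d) (Fin d) ℝ) + σ ^ 2 • Matrix.vecMulVec v v) ∧
    ((Matrix.of fun a b : Fin d =>
        (∫ ω, Δθ ω a * Δθ ω b ∂μ) - (∫ ω, Δθ ω a ∂μ) * (∫ ω, Δθ ω b ∂μ))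
      = (α ^ 2 / N) • (1 : Matrix (Fin d) (Fin d) ℝ)
        + (α ^ 2 * σ ^ 2 / (N * σR ^ 2)) • Matrix.vecMulVec v v) := by
  -- set up
  have hTmeas : ∀ i, Measurable (fun ω => (ε i ω, ξ i ω)) :=
    fun i => (hεmeas i).prodMk (hξmeas i)
  have hTmap : ∀ i, Measure.map (fun ω => (ε i ω, ξ i ω)) μ = gp2 d := by
    intro i
    have h := (indepFun_iff_map_prod_eq_prod_map_map
      (hεmeas i).aemeasurable (hξmeas i).aemeasurable).1 (hpairindep i)
    rw [h, hεdist i, hξdist i]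
    rfl
  have intT : ∀ (i) (f : ((Fin d → ℝ) × ℝ) → ℝ), Measurable f →
      ∫ ω, f (ε i ω, ξ i ω) ∂μ = ∫ p, f p ∂(gp2 d) := by
    intro i f hf
    rw [← hTmap i, integral_map (hTmeas i).aemeasurable hf.aestronglyMeasurable]
  have intgT : ∀ (i) (f : ((Fin d → ℝ) × ℝ) → ℝ), Measurable f →
      Integrable f (gp2 d) → Integrable (fun ω => f (ε i ω, ξ i ω)) μ := by
    intro i f hf hint
    rw [← hTmap i] at hint
    exact (integrable_map_measure hf.aestronglyMeasurable (hTmeas i).aemeasurable).1 hint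
  have hG : ∀ i a, (fun ω => Rtilde i ω * ε i ω a)
      = fun ω => F1 v σ σξ a (ε i ω, ξ i ω) := by
    intro i a
    funext ω
    simp only [hRtilde, F1]
  have hG2 : ∀ i a b, (fun ω => (Rtilde i ω * ε i ω a) * (Rtilde i ω * ε i ω b))
      = fun ω => (fun p => F1 v σ σξ a p * F1 v σ σξ b p) (ε i ω, ξ i ω) := by
    intro i a b
    funext ω
    simp only [hRtilde, F1]
  have EInt : ∀ i a, Integrable (fun ω => Rtilde i ω * ε i ω a) μ := by
    intro i a
    rw [hG i a]
    exact intgT i _ (measurable_F1 v σ σξ a) (integrable_F1 v σ σξ a)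
  have EInt2 : ∀ i a b,
      Integrable (fun ω => (Rtilde i ω * ε i ω a) * (Rtilde i ω * ε i ω b)) μ := by
    intro i a b
    rw [hG2 i a b]
    exact intgT i _ ((measurable_F1 v σ σξ a).mul (measurable_F1 v σ σξ b))
      (integrable_F1_mul v σ σξ a b)
  have E1 : ∀ i a, ∫ ω, Rtilde i ω * ε i ω a ∂μ = -σ * v a := by
    intro i a
    rw [hG i a, intT i _ (measurable_F1 v σ σξ a), int_F1]
  have E2 : ∀ i a b, ∫ ω, (Rtilde i ω * ε i ω a) * (Rtilde i ω * ε i ω b) ∂μ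
      = σ ^ 2 * ((∑ j, v j ^ 2) * (if a = b then (1:ℝ) else 0) + 2 * (v a * v b))
        + σξ ^ 2 * (if a = b then (1:ℝ) else 0) := by
    intro i a b
    rw [hG2 i a b, intT i (fun p => F1 v σ σξ a p * F1 v σ σξ b p) ((measurable_F1 v σ σξ a).mul (measurable_F1 v σ σξ b)),
      int_F1_mul]
  have hNR : (N : ℝ) ≠ 0 := Nat.cast_ne_zero.2 hN.ne'
  have hσRne : σR ≠ 0 := hσRpos.ne'
  constructor
  · intro i
    ext a b
    simp only [Matrix.of_apply, Matrix.add_apply, Matrix.smul_apply, Matrix.one_apply,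
      Matrix.vecMulVec_apply, smul_eq_mul]
    rw [E2 i a b, E1 i a, E1 i b, hσR2]
    by_cases hab : a = b <;> simp [hab] <;> ring
  · -- covariance of the update
    have hmean : ∀ a, ∫ ω, Δθ ω a ∂μ = (α / (N * σR)) * (N * (-σ * v a)) := by
      intro a
      have hfun : (fun ω => Δθ ω a)
          = fun ω => (α / (N * σR)) * ∑ i, Rtilde i ω * ε i ω a := by
        funext ω; exact hΔθ ω a
      rw [hfun, integral_const_mul, integral_finset_sum _ (fun i _ => EInt i a)]
      simp only [E1]
      rw [Finset.sum_const, Finset.card_univ, Fintype.card_fin, nsmul_eq_mul]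
    have hindep : ∀ (i i' : Fin N), i ≠ i' → ∀ a b,
        IndepFun (fun ω => Rtilde i ω * ε i ω a) (fun ω => Rtilde i' ω * ε i' ω b) μ := by
      intro i i' h a b
      rw [hG i a, hG i' b]
      exact (hiid.indepFun h).comp (measurable_F1 v σ σξ a) (measurable_F1 v σ σξ b)
    have hcross : ∀ (i i' : Fin N), i ≠ i' → ∀ a b,
        ∫ ω, (Rtilde i ω * ε i ω a) * (Rtilde i' ω * ε i' ω b) ∂μ
          = (-σ * v a) * (-σ * v b) := by
      intro i i' h a b
      have h2 := (hindep i i' h a b).integral_fun_mul_eq_mul_integral (EInt i a).aestronglyMeasurable (EInt i' b).aestronglyMeasurable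
      rw [E1 i a, E1 i' b] at h2
      exact h2
    have htermInt : ∀ (i i' : Fin N) a b,
        Integrable (fun ω => (Rtilde i ω * ε i ω a) * (Rtilde i' ω * ε i' ω b)) μ := by
      intro i i' a b
      by_cases h : i = i'
      · subst h; exact EInt2 i a b
      · exact (hindep i i' h a b).integrable_mul (EInt i a) (EInt i' b)
    have hQ : ∀ (i i' : Fin N) a b,
        ∫ ω, (Rtilde i ω * ε i ω a) * (Rtilde i' ω * ε i' ω b) ∂μ
          = if i = i' then
              σ ^ 2 * ((∑ j, v j ^ 2) * (if a = b then (1:ℝ) else 0) + 2 * (v a * v b))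
                + σξ ^ 2 * (if a = b then (1:ℝ) else 0)
            else (-σ * v a) * (-σ * v b) := by
      intro i i' a b
      by_cases h : i = i'
      · subst h; rw [if_pos rfl]; exact E2 i a b
      · rw [if_neg h]; exact hcross i i' h a b
    have hsec : ∀ a b, ∫ ω, Δθ ω a * Δθ ω b ∂μ
        = (α / (N * σR))^2 * (N *
            ((N : ℝ) * ((-σ * v a) * (-σ * v b))
              + (σ ^ 2 * ((∑ j, v j ^ 2) * (if a = b then (1:ℝ) else 0) + 2 * (v a * v b))
                + σξ ^ 2 * (if a = b then (1:ℝ) else 0)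
                - (-σ * v a) * (-σ * v b)))) := by
      intro a b
      have hfun2 : (fun ω => Δθ ω a * Δθ ω b)
          = fun ω => (α / (N * σR))^2 * ∑ i, ∑ i',
              (Rtilde i ω * ε i ω a) * (Rtilde i' ω * ε i' ω b) := by
        funext ω
        rw [hΔθ ω a, hΔθ ω b,
          show ((α / (N * σR)) * ∑ i, Rtilde i ω * ε i ω a)
              * ((α / (N * σR)) * ∑ i, Rtilde i ω * ε i ω b)
            = (α / (N * σR))^2 * ((∑ i, Rtilde i ω * ε i ω a)
              * (∑ i', Rtilde i' ω * ε i' ω b)) by ring,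
          Finset.sum_mul_sum]
      rw [hfun2, integral_const_mul,
        integral_finset_sum _ (fun i _ => integrable_finset_sum _ (fun i' _ => htermInt i i' a b))]
      congr 1
      rw [Finset.sum_congr rfl (fun i _ => integral_finset_sum _ (fun i' _ => htermInt i i' a b))]
      simp_rw [hQ]
      have hrow : ∀ i : Fin N, ∑ i', (if i = i' then
          σ ^ 2 * ((∑ j, v j ^ 2) * (if a = b then (1:ℝ) else 0) + 2 * (v a * v b))
            + σξ ^ 2 * (if a = b then (1:ℝ) else 0)
          else (-σ * v a) * (-σ * v b))
          = (N : ℝ) * ((-σ * v a) * (-σ * v b))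
            + (σ ^ 2 * ((∑ j, v j ^ 2) * (if a = b then (1:ℝ) else 0) + 2 * (v a * v b))
              + σξ ^ 2 * (if a = b then (1:ℝ) else 0)
              - (-σ * v a) * (-σ * v b)) := by
        intro i
        have hsplit : ∀ i' : Fin N, (if i = i' then
            σ ^ 2 * ((∑ j, v j ^ 2) * (if a = b then (1:ℝ) else 0) + 2 * (v a * v b))
              + σξ ^ 2 * (if a = b then (1:ℝ) else 0)
            else (-σ * v a) * (-σ * v b))
            = (-σ * v a) * (-σ * v b) + (if i = i' then
                σ ^ 2 * ((∑ j, v j ^ 2) * (if a = b then (1:ℝ) else 0) + 2 * (v a * v b))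
                  + σξ ^ 2 * (if a = b then (1:ℝ) else 0)
                  - (-σ * v a) * (-σ * v b) else 0) := by
          intro i'
          by_cases h : i = i' <;> simp [h]
        rw [Finset.sum_congr rfl (fun i' _ => hsplit i'), Finset.sum_add_distrib,
          Finset.sum_const, Finset.card_univ, Fintype.card_fin, nsmul_eq_mul,
          Finset.sum_ite_eq Finset.univ i]
        simp
      rw [Finset.sum_congr rfl (fun i _ => hrow i), Finset.sum_const, Finset.card_univ,
        Fintype.card_fin, nsmul_eq_mul]
    ext a b
    simp only [Matrix.of_apply, Matrix.add_apply, Matrix.smul_apply, Matrix.one_apply,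
      Matrix.vecMulVec_apply, smul_eq_mul]
    rw [hsec a b, hmean a, hmean b]
    have hξ2 : σξ ^ 2 = σR ^ 2 - σ ^ 2 * (∑ j, v j ^ 2) := by linarith [hσR2]
    rw [hξ2]
    by_cases hab : a = b
    · rw [if_pos hab]
      field_simp
      ring
    · rw [if_neg hab]
      field_simp
      ring

end Main
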